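/- Let Z be an m×n quaternion matrix and let τ > 0. Define the m×n quaternion matrix A* entrywise by A*_{ij} = (z_{ij}/‖z_{ij}‖)·max(‖z_{ij}‖−τ, 0) if z_{ij} ≠ 0 and A*_{ij} = 0 otherwise. Then A* is the unique global minimizer over all m×n quaternion matrices A of the function F(A) = (1/2)‖A − Z‖_F² + τ‖A‖₁, i.e., F(A*) ≤ F(A) for all A, with equality only when A = A*. -/

import Mathlib

open scoped Classical

noncomputable def qshrink (τ : ℝ) (z : Quaternion ℝ) : Quaternion ℝ :=
  if z = 0 then 0 else (max (‖z‖ - τ) 0 / ‖z‖) • z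

noncomputable def qg (τ : ℝ) (z a : Quaternion ℝ) : ℝ :=
  (1 / 2) * ‖a - z‖ ^ 2 + τ * ‖a‖

lemma qshrink_norm (τ : ℝ) (hτ : 0 < τ) (z : Quaternion ℝ) :
    ‖qshrink τ z‖ = max (‖z‖ - τ) 0 := by
  unfold qshrink
  split_ifs with h
  · simp [h, le_of_lt hτ]
  · have hz : 0 < ‖z‖ := norm_pos_iff.mpr h
    rw [norm_smul, Real.norm_eq_abs, abs_of_nonneg (by positivity)]
    field_simp

lemma qshrink_inner (τ : ℝ) (z : Quaternion ℝ) :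
    inner ℝ (qshrink τ z) z = max (‖z‖ - τ) 0 * ‖z‖ := by
  unfold qshrink
  split_ifs with h
  · simp [h]
  · have hz : 0 < ‖z‖ := norm_pos_iff.mpr h
    rw [real_inner_smul_left, real_inner_self_eq_norm_sq]
    field_simp

lemma real_key (s t r τ : ℝ) (ht : 0 ≤ t) (hr : r ≤ t * s) (hτ : 0 < τ) :
    (1/2) * (max (s - τ) 0)^2 - (max (s - τ) 0) * s + (1/2) * s^2 + τ * (max (s - τ) 0)
      ≤ (1/2) * t^2 - r + (1/2) * s^2 + τ * t := by
  rcases le_or_gt s τ with h | h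
  · rw [max_eq_right (by linarith)]
    nlinarith
  · rw [max_eq_left (by linarith)]
    nlinarith [sq_nonneg (t - (s - τ))]

lemma real_key_eq (s t r τ : ℝ) (ht : 0 ≤ t) (hr : r ≤ t * s) (hτ : 0 < τ)
    (heq : (1/2) * (max (s - τ) 0)^2 - (max (s - τ) 0) * s + (1/2) * s^2 + τ * (max (s - τ) 0)
      = (1/2) * t^2 - r + (1/2) * s^2 + τ * t) :
    t = max (s - τ) 0 ∧ r = t * s := by
  rcases le_or_gt s τ with h | h
  · rw [max_eq_right (by linarith)] at heq ⊢
    have ht0 : t = 0 := by nlinarith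
    constructor
    · exact ht0
    · subst ht0; nlinarith
  · rw [max_eq_left (by linarith)] at heq ⊢
    have h1 : t = s - τ := by nlinarith [sq_nonneg (t - (s - τ))]
    subst h1
    exact ⟨rfl, by nlinarith⟩

lemma qg_le (τ : ℝ) (hτ : 0 < τ) (z a : Quaternion ℝ) :
    qg τ z (qshrink τ z) ≤ qg τ z a := by
  have h1 : ‖a - z‖ ^ 2 = ‖a‖ ^ 2 - 2 * inner ℝ a z + ‖z‖ ^ 2 := norm_sub_sq_real a z
  have h2 : ‖qshrink τ z - z‖ ^ 2
      = ‖qshrink τ z‖ ^ 2 - 2 * inner ℝ (qshrink τ z) z + ‖z‖ ^ 2 := norm_sub_sq_real _ z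
  have h3 := qshrink_norm τ hτ z
  have h4 := qshrink_inner τ z
  have h5 := real_inner_le_norm a z
  have key := real_key ‖z‖ ‖a‖ (inner ℝ a z) τ (norm_nonneg a) h5 hτ
  unfold qg
  rw [h1, h2, h3, h4]
  nlinarith [key]

lemma qg_eq (τ : ℝ) (hτ : 0 < τ) (z a : Quaternion ℝ)
    (heq : qg τ z (qshrink τ z) = qg τ z a) : a = qshrink τ z := by
  have h1 : ‖a - z‖ ^ 2 = ‖a‖ ^ 2 - 2 * inner ℝ a z + ‖z‖ ^ 2 := norm_sub_sq_real a z
  have h2 : ‖qshrink τ z - z‖ ^ 2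
      = ‖qshrink τ z‖ ^ 2 - 2 * inner ℝ (qshrink τ z) z + ‖z‖ ^ 2 := norm_sub_sq_real _ z
  have h3 := qshrink_norm τ hτ z
  have h4 := qshrink_inner τ z
  have h5 := real_inner_le_norm a z
  unfold qg at heq
  rw [h1, h2, h3, h4] at heq
  have heq' : (1/2) * (max (‖z‖ - τ) 0)^2 - (max (‖z‖ - τ) 0) * ‖z‖ + (1/2) * ‖z‖^2
      + τ * (max (‖z‖ - τ) 0)
      = (1/2) * ‖a‖^2 - inner ℝ a z + (1/2) * ‖z‖^2 + τ * ‖a‖ := by ring_nf; ring_nf at heq; linarith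
  obtain ⟨ht, hrr⟩ := real_key_eq ‖z‖ ‖a‖ (inner ℝ a z) τ (norm_nonneg a) h5 hτ heq'
  by_cases hz : z = 0
  · subst hz
    simp only [norm_zero] at ht
    have h0 : ‖a‖ = 0 := by rw [ht]; simp [hτ.le]
    simp [qshrink, norm_eq_zero.mp h0]
  · have hznorm : 0 < ‖z‖ := norm_pos_iff.mpr hz
    have hcs : (inner ℝ a z : ℝ) = ‖a‖ * ‖z‖ := hrr
    have := inner_eq_norm_mul_iff_real.mp hcs
    -- ‖z‖ • a = ‖a‖ • z
    have ha : (‖a‖ / ‖z‖) • z = a := by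
      rw [div_eq_inv_mul, ← smul_smul, ← this, smul_smul,
        inv_mul_cancel₀ (ne_of_gt hznorm), one_smul]
    have hfin : qshrink τ z = a := by
      simp only [qshrink, if_neg hz]
      rw [← ht]
      exact ha
    exact hfin.symm

lemma nested_sum_eq {m n : ℕ} (f g : Fin m → Fin n → ℝ)
    (hle : ∀ i j, f i j ≤ g i j)
    (heq : ∑ i, ∑ j, f i j = ∑ i, ∑ j, g i j) :
    ∀ i j, f i j = g i j := by
  have h0 : ∑ i, ∑ j, (g i j - f i j) = 0 := by
    simp only [Finset.sum_sub_distrib, heq, sub_self]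
  have hnn : ∀ i ∈ Finset.univ, (0:ℝ) ≤ ∑ j, (g i j - f i j) := fun i _ =>
    Finset.sum_nonneg fun j _ => by linarith [hle i j]
  have h0' : ∑ i, ∑ j, (g i j - f i j) = 0 := by
    convert h0 using 2
  intro i j
  have hi := (Finset.sum_eq_zero_iff_of_nonneg hnn).mp (by simpa using h0') i (Finset.mem_univ i)
  have hj := (Finset.sum_eq_zero_iff_of_nonneg
    (fun j _ => by linarith [hle i j] : ∀ j ∈ Finset.univ, (0:ℝ) ≤ g i j - f i j)).mp hi j
    (Finset.mem_univ j)
  linarith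

/-- Entrywise quaternion shrinkage is the unique global minimizer of
`F(A) = (1/2)‖A − Z‖_F² + τ‖A‖₁` over all `m×n` quaternion matrices. -/
theorem quaternion_matrix_shrinkage_unique_minimizer
    (m n : ℕ) (Z : Matrix (Fin m) (Fin n) (Quaternion ℝ)) (τ : ℝ) (hτ : 0 < τ) :
    let Astar : Matrix (Fin m) (Fin n) (Quaternion ℝ) :=
      fun i j => if Z i j = 0 then 0 else (max (‖Z i j‖ - τ) 0 / ‖Z i j‖) • Z i j
    let F : Matrix (Fin m) (Fin n) (Quaternion ℝ) → ℝ :=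
      fun A => (1 / 2) * (∑ i, ∑ j, ‖A i j - Z i j‖ ^ 2) + τ * (∑ i, ∑ j, ‖A i j‖)
    (∀ A : Matrix (Fin m) (Fin n) (Quaternion ℝ), F Astar ≤ F A) ∧
      (∀ A : Matrix (Fin m) (Fin n) (Quaternion ℝ), F Astar = F A → A = Astar) := by
  intro Astar F
  have hAstar : ∀ i j, Astar i j = qshrink τ (Z i j) := fun i j => rfl
  have hF : ∀ A, F A = ∑ i, ∑ j, qg τ (Z i j) (A i j) := by
    intro A
    simp only [F, qg, Finset.mul_sum, ← Finset.sum_add_distrib]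
  constructor
  · intro A
    rw [hF, hF]
    apply Finset.sum_le_sum
    intro i _
    apply Finset.sum_le_sum
    intro j _
    rw [hAstar]
    exact qg_le τ hτ (Z i j) (A i j)
  · intro A heq
    rw [hF, hF] at heq
    have hle : ∀ i j, qg τ (Z i j) (Astar i j) ≤ qg τ (Z i j) (A i j) := by
      intro i j; rw [hAstar]; exact qg_le τ hτ (Z i j) (A i j)
    have := nested_sum_eq _ _ hle heq
    funext i j
    have h := this i j
    rw [hAstar] at h
    rw [hAstar]
    exact qg_eq τ hτ (Z i j) (A i j) h
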